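/- Let m ≥ 1 and n ≥ 1 be integers. Every simple graph G on n vertices with at least ⌊(m+1)n² / (2(m+2))⌋ + 1 edges has maximum degree Δ(G) ≥ n − ⌊n/(m+2)⌋. -/

import Mathlib

open SimpleGraph

/-- The join `G ∨ H` of two simple graphs: take disjoint copies of `G` and `H`
and add all edges between them. -/
def graphJoin {V W : Type*} (G : SimpleGraph V) (H : SimpleGraph W) :
    SimpleGraph (V ⊕ W) where
  Adj x y :=
    match x, y with
    | Sum.inl a, Sum.inl b => G.Adj a b
    | Sum.inr a, Sum.inr b => H.Adj a b
    | Sum.inl _, Sum.inr _ => True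
    | Sum.inr _, Sum.inl _ => True
  symm := ⟨by rintro (a | a) (b | b) h <;> first | exact h.symm | trivial⟩
  loopless := ⟨by rintro (a | a) h; exacts [G.irrefl h, H.irrefl h]⟩

/-- `H` is contained in `G` as a subgraph, i.e. `G` has a subgraph isomorphic to `H`. -/
def ContainsCopy {W V : Type*} (H : SimpleGraph W) (G : SimpleGraph V) : Prop :=
  ∃ f : H →g G, Function.Injective f

/-- The Turán number `ex(n, H)`: the maximum number of edges of a simple graph on
`n` vertices containing no subgraph isomorphic to `H`. -/
noncomputable def turanNumber {W : Type*} (n : ℕ) (H : SimpleGraph W) : ℕ :=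
  sSup {N : ℕ | ∃ G : SimpleGraph (Fin n), ¬ ContainsCopy H G ∧ G.edgeSet.ncard = N}

/-- The generalized wheel `W_{s,t} = K_s ∨ C_t`. -/
def genWheel (s t : ℕ) : SimpleGraph (Fin s ⊕ Fin t) :=
  graphJoin (⊤ : SimpleGraph (Fin s)) (cycleGraph t)

/-- For integers `m ≥ 1` and `n ≥ 1`, every simple graph on `n`
vertices with at least `⌊(m+1)n²/(2(m+2))⌋ + 1` edges has maximum degree at least
`n - ⌊n/(m+2)⌋`. -/
theorem maxDegree_ge_of_many_edges (m n : ℕ) (hm : 1 ≤ m) (hn : 1 ≤ n)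
    (G : SimpleGraph (Fin n)) [DecidableRel G.Adj]
    (hG : (m + 1) * n ^ 2 / (2 * (m + 2)) + 1 ≤ G.edgeFinset.card) :
    n - n / (m + 2) ≤ G.maxDegree := by
  by_contra h
  push_neg at h
  set k := n / (m + 2) with hk
  set q := (m + 1) * n ^ 2 / (2 * (m + 2)) with hq
  have hΔ : G.maxDegree ≤ n - k - 1 := by omega
  have h2E : 2 * G.edgeFinset.card ≤ n * (n - k - 1) := by
    rw [← G.sum_degrees_eq_twice_card_edges]
    calc ∑ v, G.degree v ≤ ∑ _v : Fin n, (n - k - 1) :=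
          Finset.sum_le_sum fun v _ => le_trans (G.degree_le_maxDegree v) hΔ
      _ = n * (n - k - 1) := by simp [Finset.sum_const, mul_comm]
  have hnd : 2 * q + 2 ≤ n * (n - k - 1) := by omega
  clear h hΔ h2E hG
  clear! G
  have hmod := Nat.div_add_mod ((m + 1) * n ^ 2) (2 * (m + 2))
  have hmodlt : (m + 1) * n ^ 2 % (2 * (m + 2)) < 2 * (m + 2) :=
    Nat.mod_lt _ (by omega)
  have hkmod := Nat.div_add_mod n (m + 2)
  have hkmodlt : n % (m + 2) < m + 2 := Nat.mod_lt _ (by omega)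
  set r := (m + 1) * n ^ 2 % (2 * (m + 2)) with hr
  set s := n % (m + 2) with hs
  rw [← hq] at hmod
  rw [← hk] at hkmod
  rcases Nat.lt_or_ge n (k + 2) with hsmall | hbig
  · have hz : n - k - 1 = 0 := by omega
    rw [hz, Nat.mul_zero] at hnd
    omega
  · obtain ⟨d, hd⟩ : ∃ d, n = k + 1 + d := ⟨n - k - 1, by omega⟩
    have hnd' : 2 * q + 2 ≤ n * d := by
      rwa [show n - k - 1 = d by omega] at hnd
    -- pass to integers
    have hd' : (d : ℤ) = n - k - 1 := by push_cast [hd]; ring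
    have hs' : (s : ℤ) = n - (m + 2) * k := by
      have : (m + 2) * k + s = n := hkmod
      push_cast [← this]; ring
    have hmod' : 2 * ((m : ℤ) + 2) * q + r = (m + 1) * n ^ 2 := by
      exact_mod_cast hmod
    have hrlt : (r : ℤ) < 2 * (m + 2) := by exact_mod_cast hmodlt
    have hnd'' : 2 * (q : ℤ) + 2 ≤ n * d := by exact_mod_cast hnd'
    -- the key algebraic identity
    have key : ((m : ℤ) + 2) * ((n : ℤ) * d) + n * (m + 2 - s) = (m + 1) * n ^ 2 := by
      linear_combination ((m : ℤ) + 2) * n * hd' - (n : ℤ) * hs'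
    -- the key scalar inequality
    have h2 : (m : ℤ) + 1 ≤ n * (m + 2 - s) := by
      rcases Nat.eq_zero_or_pos k with hk0 | hk1
      · have hns : (s : ℤ) = n := by rw [hs']; push_cast [hk0]; ring
        have hn1 : 1 ≤ (n : ℤ) := by exact_mod_cast hn
        have hnm : (n : ℤ) ≤ m + 1 := by
          have := hkmodlt
          have : s ≤ m + 1 := by omega
          have : (s : ℤ) ≤ m + 1 := by exact_mod_cast this
          omega
        nlinarith [mul_nonneg (by linarith : (0:ℤ) ≤ (n:ℤ) - 1)
          (by linarith : (0:ℤ) ≤ (m:ℤ) + 1 - n)]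
      · have hnge : (m : ℤ) + 2 ≤ n := by
          have : m + 2 ≤ n := by
            calc m + 2 ≤ (m + 2) * k := Nat.le_mul_of_pos_right _ hk1
              _ ≤ (m + 2) * k + s := by omega
              _ = n := hkmod
          exact_mod_cast this
        have hsle : (s : ℤ) ≤ m + 1 := by
          have : s ≤ m + 1 := by omega
          exact_mod_cast this
        nlinarith [mul_nonneg (by linarith : (0:ℤ) ≤ (n:ℤ))
          (by linarith : (0:ℤ) ≤ (m:ℤ) + 1 - s)]
    -- combine everything
    have h3 : ((m : ℤ) + 2) * (2 * q + 2) ≤ ((m : ℤ) + 2) * (n * d) :=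
      mul_le_mul_of_nonneg_left hnd'' (by positivity)
    have hm' : (1 : ℤ) ≤ m := by exact_mod_cast hm
    linarith
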